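/- Let A ⊆ ℝ be an open invex set with respect to η : A × A → ℝ, and let a, b ∈ A with a < a + η(b,a). Suppose f : A → ℝ is differentiable and f' is integrable on [a, a + η(b,a)]. Then for all x ∈ [a, a + η(b,a)], f(x) - (1/η(b,a)) ∫_a^{a+η(b,a)} f(u) du = η(b,a) ( ∫_0^{(x-a)/η(b,a)} t f'(a + t η(b,a)) dt + ∫_{(x-a)/η(b,a)}^1 (t-1) f'(a + t η(b,a)) dt ). -/

import Mathlib

open MeasureTheory intervalIntegral Set

theorem ostrowski_identity_preinvex
    (A : Set ℝ) (η : ℝ → ℝ → ℝ) (a b : ℝ) (f f' : ℝ → ℝ)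
    (hA : IsOpen A)
    (hinv : ∀ x ∈ A, ∀ y ∈ A, ∀ t ∈ Icc (0:ℝ) 1, x + t * η y x ∈ A)
    (ha : a ∈ A) (hb : b ∈ A) (hab : a < a + η b a)
    (hf : ∀ x ∈ A, HasDerivAt f (f' x) x)
    (hint : IntervalIntegrable f' volume a (a + η b a)) :
    ∀ x ∈ Icc a (a + η b a),
      f x - (1 / η b a) * ∫ u in a..(a + η b a), f u =
        η b a *
          ((∫ t in (0:ℝ)..((x - a) / η b a), t * f' (a + t * η b a)) +
           ∫ t in ((x - a) / η b a)..(1:ℝ), (t - 1) * f' (a + t * η b a)) := by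
  intro x hx
  set h := η b a with hη
  have hh : 0 < h := by linarith [hab]
  set s := (x - a) / h with hsdef
  have hs0 : (0:ℝ) ≤ s := div_nonneg (by linarith [hx.1]) hh.le
  have hs1 : s ≤ 1 := by rw [hsdef, div_le_one hh]; linarith [hx.2]
  have hxs : a + s * h = x := by rw [hsdef, div_mul_cancel₀ _ hh.ne']; ring
  set g : ℝ → ℝ := fun t => f (a + t * h) with hgdef
  have hmem : ∀ t ∈ Icc (0:ℝ) 1, a + t * h ∈ A := fun t ht => hinv a ha b hb t ht
  have hg : ∀ t ∈ Icc (0:ℝ) 1, HasDerivAt g (f' (a + t * h) * h) t := by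
    intro t ht
    have h1 : HasDerivAt (fun t : ℝ => a + t * h) h t := by
      simpa using ((hasDerivAt_id t).mul_const h).const_add a
    exact (hf _ (hmem t ht)).comp t h1
  have hsub1 : uIcc (0:ℝ) s ⊆ Icc (0:ℝ) 1 := by
    rw [uIcc_of_le hs0]; exact Icc_subset_Icc le_rfl hs1
  have hsub2 : uIcc s (1:ℝ) ⊆ Icc (0:ℝ) 1 := by
    rw [uIcc_of_le hs1]; exact Icc_subset_Icc hs0 le_rfl
  -- integrability of t ↦ f' (a + t*h) * h on [0,1]
  have hint1 : IntervalIntegrable (fun t => f' (a + t * h) * h) volume 0 1 := by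
    have h1 := (hint.comp_add_left a).comp_mul_left (c := h)
    have h2 : IntervalIntegrable (fun x => f' (a + h * x)) volume 0 1 := by
      simpa [hh.ne', sub_self] using h1
    have h3 : IntervalIntegrable (fun x => f' (a + x * h)) volume 0 1 := by
      simpa [mul_comm] using h2
    exact h3.mul_const h
  have hintsub1 : IntervalIntegrable (fun t => f' (a + t * h) * h) volume 0 s :=
    hint1.mono_set (by rw [uIcc_of_le hs0, uIcc_of_le (zero_le_one)]; exact Icc_subset_Icc le_rfl hs1)
  have hintsub2 : IntervalIntegrable (fun t => f' (a + t * h) * h) volume s 1 :=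
    hint1.mono_set (by rw [uIcc_of_le hs1, uIcc_of_le (zero_le_one)]; exact Icc_subset_Icc hs0 le_rfl)
  have hone1 : IntervalIntegrable (fun _ : ℝ => (1:ℝ)) volume 0 s := intervalIntegrable_const
  have hone2 : IntervalIntegrable (fun _ : ℝ => (1:ℝ)) volume s 1 := intervalIntegrable_const
  -- integration by parts on [0,s] with u = id
  have E1 : ∫ t in (0:ℝ)..s, t * (f' (a + t * h) * h)
      = s * g s - 0 * g 0 - ∫ t in (0:ℝ)..s, 1 * g t := by
    apply intervalIntegral.integral_mul_deriv_eq_deriv_mul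
    · intro t ht; simpa using hasDerivAt_id' t
    · intro t ht; exact hg t (hsub1 ht)
    · exact hone1
    · exact hintsub1
  -- integration by parts on [s,1] with u = (· - 1)
  have E2 : ∫ t in s..(1:ℝ), (t - 1) * (f' (a + t * h) * h)
      = ((1:ℝ) - 1) * g 1 - (s - 1) * g s - ∫ t in s..(1:ℝ), 1 * g t := by
    apply intervalIntegral.integral_mul_deriv_eq_deriv_mul
    · intro t ht; simpa using (hasDerivAt_id t).sub_const 1
    · intro t ht; exact hg t (hsub2 ht)
    · exact hone2
    · exact hintsub2
  simp only [one_mul] at E1 E2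
  -- continuity of g, integrability of g
  have hgint : ∀ c d : ℝ, uIcc c d ⊆ Icc (0:ℝ) 1 → IntervalIntegrable g volume c d := by
    intro c d hcd
    apply ContinuousOn.intervalIntegrable
    intro t ht
    exact ((hg t (hcd ht)).continuousAt).continuousWithinAt
  have hsplit : (∫ t in (0:ℝ)..s, g t) + ∫ t in s..(1:ℝ), g t = ∫ t in (0:ℝ)..(1:ℝ), g t :=
    intervalIntegral.integral_add_adjacent_intervals (hgint 0 s hsub1) (hgint s 1 hsub2)
  -- substitution for the integral of f
  have hsubst : (∫ u in a..(a + h), f u) = h * ∫ t in (0:ℝ)..(1:ℝ), g t := by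
    have := intervalIntegral.smul_integral_comp_mul_add f h a (a := (0:ℝ)) (b := 1)
    simp only [smul_eq_mul, mul_zero, zero_add, mul_one] at this
    rw [show h + a = a + h by ring] at this
    rw [← this]
    congr 1
    apply intervalIntegral.integral_congr
    intro t ht
    simp [hgdef, mul_comm, add_comm]
  -- pull h into the integrals on the RHS
  have hI1 : h * ∫ t in (0:ℝ)..s, t * f' (a + t * h)
      = ∫ t in (0:ℝ)..s, t * (f' (a + t * h) * h) := by
    rw [← intervalIntegral.integral_const_mul]
    apply intervalIntegral.integral_congr
    intro t ht; ring
  have hI2 : h * ∫ t in s..(1:ℝ), (t - 1) * f' (a + t * h)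
      = ∫ t in s..(1:ℝ), (t - 1) * (f' (a + t * h) * h) := by
    rw [← intervalIntegral.integral_const_mul]
    apply intervalIntegral.integral_congr
    intro t ht; ring
  have hgs : g s = f x := by rw [hgdef]; simp [hxs]
  rw [mul_add, hI1, hI2, E1, E2, hsubst]
  have h1h : (1 / h) * (h * ∫ t in (0:ℝ)..(1:ℝ), g t) = ∫ t in (0:ℝ)..(1:ℝ), g t := by
    field_simp
  rw [h1h, ← hsplit, hgs]
  ring
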